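/- Let h ∈ ℂ^{N_b×N_b} be Hermitian, Δ ∈ ℂ^{N_b×N_b} be antisymmetric, and 𝓗 = [[h, Δ], [−Δ̄, −h̄]]. If 𝓗 is invertible (i.e., has no zero eigenvalue), then there exist matrices U, V ∈ ℂ^{N_b×N_b} and a diagonal matrix Λ ∈ ℝ^{N_b×N_b} with strictly positive diagonal entries such that the 2N_b×2N_b matrix W = [[U, V̄], [V, Ū]] is unitary and 𝓗 W = W [[Λ, 0], [0, −Λ]]. -/

import Mathlib

open Matrix
open scoped InnerProductSpace

namespace QBaux
noncomputable section
variable {Nb : ℕ}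

local notation "c" => starRingEnd ℂ

def Csw (x : EuclideanSpace ℂ (Fin Nb ⊕ Fin Nb)) : EuclideanSpace ℂ (Fin Nb ⊕ Fin Nb) :=
  WithLp.toLp 2 (Sum.elim (fun i => c (x (Sum.inr i))) (fun i => c (x (Sum.inl i))))

lemma Csw_inner (x y : EuclideanSpace ℂ (Fin Nb ⊕ Fin Nb)) :
    ⟪Csw x, Csw y⟫_ℂ = ⟪y, x⟫_ℂ := by
  simp [PiLp.inner_apply, Csw, Fintype.sum_sum_type, mul_comm, add_comm]

lemma Csw_smul (r : ℝ) (x : EuclideanSpace ℂ (Fin Nb ⊕ Fin Nb)) :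
    (Csw (r • x) : (Fin Nb ⊕ Fin Nb) → ℂ) = r • (Csw x : (Fin Nb ⊕ Fin Nb) → ℂ) := by
  funext a; cases a <;> simp [Csw]

lemma Csw_anticomm (h Δ : Matrix (Fin Nb) (Fin Nb) ℂ) (x : (Fin Nb ⊕ Fin Nb) → ℂ) :
    (Matrix.fromBlocks h Δ (-(Δ.map c)) (-(h.map c))) *ᵥ (Csw (WithLp.toLp 2 x) : (Fin Nb ⊕ Fin Nb) → ℂ)
      = -(Csw (WithLp.toLp 2 ((Matrix.fromBlocks h Δ (-(Δ.map c)) (-(h.map c))) *ᵥ x)) : (Fin Nb ⊕ Fin Nb) → ℂ) := by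
  funext a
  cases a <;>
    simp [Csw, mulVec, dotProduct, Fintype.sum_sum_type, map_sum, add_comm]

lemma isHermitian_A (h Δ : Matrix (Fin Nb) (Fin Nb) ℂ)
    (hh : hᴴ = h) (hΔ : Δᵀ = -Δ) :
    (Matrix.fromBlocks h Δ (-(Δ.map c)) (-(h.map c))).IsHermitian := by
  have hhe : ∀ i j, c (h j i) = h i j := fun i j => congrFun (congrFun hh i) j
  have hΔe : ∀ i j : Fin Nb, Δ j i = -Δ i j := by
    intro i j
    simpa using congrFun (congrFun hΔ i) j
  ext a b
  cases a with
  | inl i => cases b with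
    | inl j => simpa [Matrix.conjTranspose_apply] using hhe i j
    | inr j =>
        simp only [Matrix.conjTranspose_apply, fromBlocks_apply₂₁, fromBlocks_apply₁₂,
          Matrix.neg_apply, Matrix.map_apply, map_neg, RingHom.id_apply,
          RingHomCompTriple.comp_apply, Complex.conj_conj, starRingEnd_self_apply]
        rw [hΔe j i]; simp
  | inr i => cases b with
    | inl j =>
        simp only [Matrix.conjTranspose_apply, fromBlocks_apply₁₂, fromBlocks_apply₂₁,
          Matrix.neg_apply, Matrix.map_apply]
        rw [hΔe i j]; simp
    | inr j =>
        simp only [Matrix.conjTranspose_apply, fromBlocks_apply₂₂, Matrix.neg_apply,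
          Matrix.map_apply]
        rw [← hhe i j]
        simp [RCLike.star_def]

variable {n : Type*} [Fintype n] [DecidableEq n]

lemma herm_sym {A : Matrix n n ℂ} (hA : A.IsHermitian)
    (x y : EuclideanSpace ℂ n) :
    ⟪((WithLp.equiv 2 (n → ℂ)).symm (A *ᵥ (x : n → ℂ))), y⟫_ℂ
      = ⟪x, ((WithLp.equiv 2 (n → ℂ)).symm (A *ᵥ (y : n → ℂ)))⟫_ℂ := by
  have := (Matrix.isHermitian_iff_isSymmetric.mp hA) x y
  simpa [Matrix.toEuclideanLin_apply] using this

lemma eig_orth {A : Matrix n n ℂ} (hA : A.IsHermitian)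
    {x y : EuclideanSpace ℂ n} {a b : ℝ}
    (hx : A *ᵥ (x : n → ℂ) = a • (x : n → ℂ))
    (hy : A *ᵥ (y : n → ℂ) = b • (y : n → ℂ))
    (hab : a ≠ b) : ⟪x, y⟫_ℂ = 0 := by
  have h1 := herm_sym hA x y
  rw [hx, hy] at h1
  have hx' : (WithLp.equiv 2 (n → ℂ)).symm (a • (x : n → ℂ)) = a • x := rfl
  have hy' : (WithLp.equiv 2 (n → ℂ)).symm (b • (y : n → ℂ)) = b • y := rfl
  rw [hx', hy', RCLike.real_smul_eq_coe_smul (K := ℂ) a,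
    RCLike.real_smul_eq_coe_smul (K := ℂ) b, inner_smul_left, inner_smul_right,
    RCLike.conj_ofReal] at h1
  by_contra hne
  exact hab (by exact_mod_cast mul_right_cancel₀ hne h1)

end
end QBaux

open QBaux

/-- Bogoliubov-structured diagonalization: if the
quasi-particle Hamiltonian `𝓗 = [[h, Δ], [−Δ̄, −h̄]]` is invertible,
then there are `U, V` and a positive diagonal `Λ` such that
`W = [[U, V̄], [V, Ū]]` is unitary and `𝓗 W = W [[Λ, 0], [0, −Λ]]`. -/
theorem quasiparticle_bogoliubov_diagonalization
    (Nb : ℕ)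
    (h Δ : Matrix (Fin Nb) (Fin Nb) ℂ)
    (hh : hᴴ = h) (hΔ : Δᵀ = -Δ)
    (hinv : IsUnit (Matrix.fromBlocks h Δ (-(Δ.map (starRingEnd ℂ)))
        (-(h.map (starRingEnd ℂ))))) :
    ∃ (U V : Matrix (Fin Nb) (Fin Nb) ℂ) (Λ : Fin Nb → ℝ),
      (∀ i, 0 < Λ i) ∧
      (Matrix.fromBlocks U (V.map (starRingEnd ℂ)) V (U.map (starRingEnd ℂ)))ᴴ *
        (Matrix.fromBlocks U (V.map (starRingEnd ℂ)) V (U.map (starRingEnd ℂ))) = 1 ∧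
      (Matrix.fromBlocks h Δ (-(Δ.map (starRingEnd ℂ)))
          (-(h.map (starRingEnd ℂ)))) *
        (Matrix.fromBlocks U (V.map (starRingEnd ℂ)) V (U.map (starRingEnd ℂ))) =
      (Matrix.fromBlocks U (V.map (starRingEnd ℂ)) V (U.map (starRingEnd ℂ))) *
        (Matrix.fromBlocks (Matrix.diagonal (fun i => (Λ i : ℂ))) 0 0
          (-(Matrix.diagonal (fun i => (Λ i : ℂ))))) := by
  classical
  set n := (Fin Nb ⊕ Fin Nb)
  set A : Matrix n n ℂ := Matrix.fromBlocks h Δ (-(Δ.map (starRingEnd ℂ)))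
      (-(h.map (starRingEnd ℂ))) with hAdef
  have hA : A.IsHermitian := isHermitian_A h Δ hh hΔ
  set B := hA.eigenvectorBasis with hBdef
  set μ := hA.eigenvalues with hμdef
  have eig : ∀ j : n, A *ᵥ (B j : n → ℂ) = μ j • (B j : n → ℂ) :=
    hA.mulVec_eigenvectorBasis
  have eigC : ∀ j : n, A *ᵥ (Csw (B j) : n → ℂ) = (-(μ j)) • (Csw (B j) : n → ℂ) := by
    intro j
    rw [show Csw (B j) = Csw (WithLp.toLp 2 (B j : n → ℂ)) from rfl]
    rw [Csw_anticomm h Δ (B j : n → ℂ), eig j]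
    rw [show WithLp.toLp 2 (μ j • (B j : n → ℂ)) = μ j • B j from rfl]
    rw [Csw_smul]
    funext a; simp
  -- eigenvalues are nonzero
  have hmulinj : Function.Injective (A.mulVec) := Matrix.mulVec_injective_iff_isUnit.mpr hinv
  have hμne : ∀ j : n, μ j ≠ 0 := by
    intro j hj
    have h0 : A *ᵥ (B j : n → ℂ) = A *ᵥ (0 : n → ℂ) := by
      rw [eig j, hj]; simp
    have := hmulinj h0
    exact B.orthonormal.ne_zero j (by ext a; exact congrFun this a)
  -- positive and negative index sets
  set s : Finset n := Finset.univ.filter (fun j => 0 < μ j) with hsdef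
  set t : Finset n := Finset.univ.filter (fun j => μ j < 0) with htdef
  have hcn : Fintype.card n = 2 * Nb := by
    show Fintype.card (Fin Nb ⊕ Fin Nb) = 2 * Nb
    simp [two_mul]
  have hfinrank : Module.finrank ℂ (EuclideanSpace ℂ n) = 2 * Nb := by
    rw [finrank_euclideanSpace, hcn]
  -- the orthonormal family for a sign
  have key : ∀ (sng : ℝ) (hsng : sng = 1 ∨ sng = -1),
      Orthonormal ℂ (fun z : ({j : n // j ∈ Finset.univ.filter (fun j => 0 < sng * μ j)} ⊕
        {j : n // j ∈ Finset.univ.filter (fun j => 0 < sng * μ j)}) =>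
        Sum.elim (fun k : {j : n // j ∈ Finset.univ.filter (fun j => 0 < sng * μ j)} => B k.1)
          (fun k : {j : n // j ∈ Finset.univ.filter (fun j => 0 < sng * μ j)} => Csw (B k.1)) z) := by
    intro sng hsng
    rw [orthonormal_iff_ite]
    have hB := orthonormal_iff_ite.mp B.orthonormal
    rintro (⟨j, hj⟩ | ⟨j, hj⟩) (⟨k, hk⟩ | ⟨k, hk⟩) <;>
      simp only [Finset.mem_filter, Finset.mem_univ, true_and] at hj hk <;>
      simp only [Sum.elim_inl, Sum.elim_inr]
    · rw [hB j k]
      by_cases hjk : j = k <;> simp [hjk]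
    · rw [eig_orth hA (eig j) (eigC k) (by rcases hsng with h1 | h1 <;> rw [h1] at hj hk <;> intro hjk <;> nlinarith)]
      simp
    · rw [eig_orth hA (eigC j) (eig k) (by rcases hsng with h1 | h1 <;> rw [h1] at hj hk <;> intro hjk <;> nlinarith)]
      simp
    · rw [Csw_inner, hB k j]
      by_cases hjk : j = k <;> simp [hjk, eq_comm]
  have cardle : ∀ (sng : ℝ), sng = 1 ∨ sng = -1 →
      (Finset.univ.filter (fun j => 0 < sng * μ j)).card ≤ Nb := by
    intro sng hsng
    have h1 := ((key sng hsng).linearIndependent).fintype_card_le_finrank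
    rw [hfinrank] at h1
    simp only [Fintype.card_sum, Fintype.card_coe] at h1
    omega
  have hs1 : s = Finset.univ.filter (fun j => 0 < (1:ℝ) * μ j) := by
    simp [hsdef]
  have ht1 : t = Finset.univ.filter (fun j => 0 < (-1:ℝ) * μ j) := by
    simp [htdef]
  have hscard : s.card ≤ Nb := by rw [hs1]; exact cardle 1 (Or.inl rfl)
  have htcard : t.card ≤ Nb := by rw [ht1]; exact cardle (-1) (Or.inr rfl)
  have hunion : s ∪ t = Finset.univ := by
    ext j
    simp only [Finset.mem_union, hsdef, htdef, Finset.mem_filter, Finset.mem_univ, true_and,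
      iff_true]
    rcases lt_trichotomy (μ j) 0 with h1 | h1 | h1
    · exact Or.inr h1
    · exact absurd h1 (hμne j)
    · exact Or.inl h1
  have hdisj : Disjoint s t := by
    rw [Finset.disjoint_left]
    intro j hj hj'
    simp only [hsdef, htdef, Finset.mem_filter, Finset.mem_univ, true_and] at hj hj'
    linarith
  have hcards : s.card + t.card = 2 * Nb := by
    have h2 := Finset.card_union_of_disjoint hdisj
    rw [hunion, Finset.card_univ, hcn] at h2
    omega
  have hsNb : s.card = Nb := by omega
  -- the equivalence
  set e : Fin Nb ≃ {j : n // j ∈ s} := (s.equivFinOfCardEq hsNb).symm with hedef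
  have hpos : ∀ z : {j : n // j ∈ s}, 0 < μ z.1 := by
    rintro ⟨z, hz⟩
    simp only [hsdef, Finset.mem_filter, Finset.mem_univ, true_and] at hz
    exact hz
  set U : Matrix (Fin Nb) (Fin Nb) ℂ := fun i k => B (e k).1 (Sum.inl i) with hUdef
  set V : Matrix (Fin Nb) (Fin Nb) ℂ := fun i k => B (e k).1 (Sum.inr i) with hVdef
  set W : Matrix n n ℂ := Matrix.fromBlocks U (V.map (starRingEnd ℂ)) V (U.map (starRingEnd ℂ))
    with hWdef
  set col : n → EuclideanSpace ℂ n :=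
    Sum.elim (fun k => B (e k).1) (fun k => Csw (B (e k).1)) with hcoldef
  have hWcol : ∀ (a b' : n), W a b' = (col b' : n → ℂ) a := by
    rintro (i | i) (k | k) <;> rfl
  have hB := orthonormal_iff_ite.mp B.orthonormal
  refine ⟨U, V, fun k => μ (e k).1, fun k => hpos (e k), ?_, ?_⟩
  · -- unitarity
    rw [← hWdef]
    ext x y
    rw [Matrix.mul_apply, Matrix.one_apply]
    have h1 : ∀ i, Wᴴ x i * W i y = (starRingEnd ℂ) ((col x : n → ℂ) i) * (col y : n → ℂ) i := by
      intro i
      rw [Matrix.conjTranspose_apply, hWcol, hWcol]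
      rfl
    rw [Finset.sum_congr rfl (fun i _ => h1 i)]
    have h2 : ∑ i, (starRingEnd ℂ) ((col x : n → ℂ) i) * (col y : n → ℂ) i
        = ⟪col x, col y⟫_ℂ := by
      rw [PiLp.inner_apply]
      simp [RCLike.inner_apply]
      exact Finset.sum_congr rfl (fun _ _ => mul_comm _ _)
    rw [h2]
    rcases x with j | j <;> rcases y with k | k
    · show ⟪B (e j).1, B (e k).1⟫_ℂ = _
      rw [hB]
      by_cases hjk : j = k
      · simp [hjk]
      · have hne : (e j).1 ≠ (e k).1 := fun hc => hjk (e.injective (Subtype.ext hc))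
        simp [hjk, hne]
    · show ⟪B (e j).1, Csw (B (e k).1)⟫_ℂ = _
      rw [eig_orth hA (eig (e j).1) (eigC (e k).1)
        (by have := hpos (e j); have := hpos (e k); intro hc; linarith)]
      simp
    · show ⟪Csw (B (e j).1), B (e k).1⟫_ℂ = _
      rw [eig_orth hA (eigC (e j).1) (eig (e k).1)
        (by have := hpos (e j); have := hpos (e k); intro hc; linarith)]
      simp
    · show ⟪Csw (B (e j).1), Csw (B (e k).1)⟫_ℂ = _
      rw [Csw_inner, hB]
      by_cases hjk : j = k
      · simp [hjk]
      · have hne : (e k).1 ≠ (e j).1 := fun hc => hjk (e.injective (Subtype.ext hc)).symm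
        simp [hjk, hne]
  · -- eigen equation
    rw [← hWdef]
    ext a b
    rw [Matrix.mul_apply, Matrix.mul_apply]
    have hL : ∑ i, A a i * W i b = (A *ᵥ (col b : n → ℂ)) a := by
      simp only [hWcol]
      rfl
    rw [hL]
    rcases b with k | k
    · rw [show (col (Sum.inl k) : n → ℂ) = (B (e k).1 : n → ℂ) from rfl, eig]
      rw [Fintype.sum_sum_type]
      simp only [hWcol, Matrix.fromBlocks_apply₁₁, Matrix.fromBlocks_apply₂₁,
        Matrix.diagonal_apply, Matrix.zero_apply, mul_zero, Finset.sum_const_zero, add_zero,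
        mul_ite, mul_zero]
      rw [Finset.sum_ite_eq' Finset.univ k]
      simp only [Finset.mem_univ, if_true]
      show (μ (e k).1 • ((B (e k).1 : n → ℂ))) a = _
      rw [show (col (Sum.inl k) : n → ℂ) = (B (e k).1 : n → ℂ) from rfl]
      simp [Pi.smul_apply, Complex.real_smul, mul_comm]
    · rw [show (col (Sum.inr k) : n → ℂ) = (Csw (B (e k).1) : n → ℂ) from rfl, eigC]
      rw [Fintype.sum_sum_type]
      simp only [hWcol, Matrix.fromBlocks_apply₁₂, Matrix.fromBlocks_apply₂₂,
        Matrix.neg_apply, Matrix.diagonal_apply, Matrix.zero_apply, mul_zero,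
        Finset.sum_const_zero, zero_add, mul_ite, mul_zero, mul_neg]
      simp only [apply_ite (Neg.neg : ℂ → ℂ), neg_zero]
      rw [Finset.sum_ite_eq' Finset.univ k]
      simp only [Finset.mem_univ, if_true]
      show ((-(μ (e k).1)) • ((Csw (B (e k).1) : n → ℂ))) a = _
      rw [show (col (Sum.inr k) : n → ℂ) = (Csw (B (e k).1) : n → ℂ) from rfl]
      simp [Pi.smul_apply, Complex.real_smul, mul_comm]
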